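/- Let φ : ℝ → ℝ be a homeomorphism with φ(0)=0 and f : [0,T]×ℝ×ℝ → ℝ continuous. A function u ∈ C¹([0,T]) with φ∘u' continuously differentiable satisfies (φ(u'))' = f(t,u,u') with u(T) = u'(0) = u'(T) if and only if u = S(u) + Q(N_f u) + K(φ⁻¹[H(N_f u − Q(N_f u)) + φ(S(u))]), where S(u)(t) = u(T), Q(v)(t) = (1/T)∫₀ᵀ v, H(v)(t) = ∫₀ᵗ v, K(v)(t) = −∫ₜᵀ v, N_f(u)(t) = f(t,u(t),u'(t)). -/

import Mathlib

open Set intervalIntegral MeasureTheory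

/-- FTC evaluation on a subinterval of [0,T]. -/
lemma my_ftc_eval {T a b : ℝ} (ha : 0 ≤ a) (hab : a ≤ b) (hbT : b ≤ T)
    (g g' : ℝ → ℝ)
    (hg : ∀ t ∈ Set.Icc (0:ℝ) T, HasDerivWithinAt g (g' t) (Set.Icc 0 T) t)
    (hg' : ContinuousOn g' (Set.Icc 0 T)) :
    ∫ x in a..b, g' x = g b - g a := by
  have hsub : Set.Icc a b ⊆ Set.Icc (0:ℝ) T := Set.Icc_subset_Icc ha hbT
  apply integral_eq_sub_of_hasDeriv_right_of_le hab
  · exact fun t ht => ((hg t (hsub ht)).continuousWithinAt).mono hsub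
  · intro x hx
    exact (hg x (hsub (Set.Ioo_subset_Icc_self hx))).mono_of_mem_nhdsWithin
      (Icc_mem_nhdsGT_of_mem ⟨le_trans ha hx.1.le, lt_of_lt_of_le hx.2 hbT⟩)
  · exact (hg'.mono hsub).intervalIntegrable_of_Icc hab

/-- FTC derivative: integral with base point `a` has derivative within Icc 0 T. -/
lemma my_ftc_deriv {T a t : ℝ} (haI : a ∈ Set.Icc (0:ℝ) T) (ht : t ∈ Set.Icc (0:ℝ) T)
    (h : ℝ → ℝ) (hc : ContinuousOn h (Set.Icc 0 T)) :
    HasDerivWithinAt (fun x => ∫ r in a..x, h r) (h t) (Set.Icc 0 T) t := by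
  haveI : Fact (t ∈ Set.Icc (0:ℝ) T) := ⟨ht⟩
  exact integral_hasDerivWithinAt_right
    ((hc.mono (Set.uIcc_subset_Icc haI ht)).intervalIntegrable)
    (hc.stronglyMeasurableAtFilter_nhdsWithin measurableSet_Icc t)
    (hc t ht)

lemma my_deriv_unique {T t : ℝ} (hT : 0 < T) (ht : t ∈ Set.Icc (0:ℝ) T)
    {g : ℝ → ℝ} {d₁ d₂ : ℝ}
    (h1 : HasDerivWithinAt g d₁ (Set.Icc 0 T) t)
    (h2 : HasDerivWithinAt g d₂ (Set.Icc 0 T) t) : d₁ = d₂ := by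
  have hu := (uniqueDiffOn_Icc hT) t ht
  rw [← h1.derivWithin hu, ← h2.derivWithin hu]

theorem stmt13 (T : ℝ) (hT : 0 < T)
    (φ : ℝ ≃ₜ ℝ) (hφ0 : φ 0 = 0)
    (f : ℝ → ℝ → ℝ → ℝ)
    (hf : Continuous fun p : ℝ × ℝ × ℝ => f p.1 p.2.1 p.2.2)
    (u u' v : ℝ → ℝ)
    (hu : ∀ t ∈ Set.Icc (0:ℝ) T, HasDerivWithinAt u (u' t) (Set.Icc 0 T) t)
    (hu'c : ContinuousOn u' (Set.Icc 0 T))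
    (hv : ∀ t ∈ Set.Icc (0:ℝ) T,
      HasDerivWithinAt (fun s => φ (u' s)) (v t) (Set.Icc 0 T) t)
    (hvc : ContinuousOn v (Set.Icc 0 T)) :
    ((∀ t ∈ Set.Icc (0:ℝ) T, v t = f t (u t) (u' t)) ∧
      u T = u' 0 ∧ u' 0 = u' T) ↔
    (∀ t ∈ Set.Icc (0:ℝ) T,
      u t = u T + (1 / T) * (∫ q in (0:ℝ)..T, f q (u q) (u' q)) +
        -(∫ s in t..T, φ.symm
          ((∫ r in (0:ℝ)..s, (f r (u r) (u' r) -
            (1 / T) * ∫ q in (0:ℝ)..T, f q (u q) (u' q))) + φ (u T)))) := by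
  have h0T : (0:ℝ) ∈ Set.Icc (0:ℝ) T := ⟨le_rfl, hT.le⟩
  have hTT : T ∈ Set.Icc (0:ℝ) T := ⟨hT.le, le_rfl⟩
  set F : ℝ → ℝ := fun t => f t (u t) (u' t) with hFdef
  have huc : ContinuousOn u (Set.Icc 0 T) := fun t ht => (hu t ht).continuousWithinAt
  have hFc : ContinuousOn F (Set.Icc 0 T) :=
    (hf.comp_continuousOn (continuousOn_id.prodMk (huc.prodMk hu'c)) :)
  constructor
  · rintro ⟨hveq, hbc1, hbc2⟩ t ht
    -- the mean value of F is 0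
    have hIv : ∫ x in (0:ℝ)..T, v x = φ (u' T) - φ (u' 0) :=
      my_ftc_eval le_rfl hT.le le_rfl _ v hv hvc
    have hIF : ∫ q in (0:ℝ)..T, F q = 0 := by
      rw [intervalIntegral.integral_congr (g := v)
        (fun s hs => (hveq s (by rwa [Set.uIcc_of_le hT.le] at hs)).symm)]
      rw [hIv, hbc2, sub_self]
    rw [hIF]
    simp only [mul_zero, sub_zero]
    have hcong : ∀ s ∈ Set.Icc t T,
        φ.symm ((∫ r in (0:ℝ)..s, F r) + φ (u T)) = u' s := by
      intro s hs
      have hsI : s ∈ Set.Icc (0:ℝ) T := ⟨le_trans ht.1 hs.1, hs.2⟩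
      have h1 : ∫ r in (0:ℝ)..s, F r = φ (u' s) - φ (u' 0) := by
        rw [intervalIntegral.integral_congr (g := v)
          (fun r hr => (hveq r (by
            rw [Set.uIcc_of_le hsI.1] at hr
            exact ⟨hr.1, le_trans hr.2 hsI.2⟩)).symm)]
        exact my_ftc_eval le_rfl hsI.1 hsI.2 _ v hv hvc
      rw [h1, hbc1, sub_add_cancel, Homeomorph.symm_apply_apply]
    have h2 : (∫ s in t..T, φ.symm ((∫ r in (0:ℝ)..s, F r) + φ (u T)))
        = ∫ s in t..T, u' s :=
      intervalIntegral.integral_congr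
        (fun s hs => hcong s (by rwa [Set.uIcc_of_le ht.2] at hs))
    rw [h2, my_ftc_eval ht.1 ht.2 le_rfl u u' hu hu'c]
    ring
  · intro h
    set c : ℝ := (1 / T) * ∫ q in (0:ℝ)..T, F q with hcdef
    set H : ℝ → ℝ := fun s => ∫ r in (0:ℝ)..s, (F r - c) with hHdef
    set g : ℝ → ℝ := fun s => φ.symm (H s + φ (u T)) with hgdef
    have hFc' : ContinuousOn (fun r => F r - c) (Set.Icc 0 T) :=
      hFc.sub continuousOn_const
    have hH : ∀ t ∈ Set.Icc (0:ℝ) T,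
        HasDerivWithinAt H (F t - c) (Set.Icc 0 T) t :=
      fun t ht => my_ftc_deriv h0T ht _ hFc'
    have hHc : ContinuousOn H (Set.Icc 0 T) := fun t ht => (hH t ht).continuousWithinAt
    have hgc : ContinuousOn g (Set.Icc 0 T) :=
      φ.symm.continuous.comp_continuousOn (hHc.add continuousOn_const)
    -- u' = g on [0,T]
    have hu'g : ∀ t ∈ Set.Icc (0:ℝ) T, u' t = g t := by
      intro t ht
      have hw : HasDerivWithinAt
          (fun x => u T + c + ∫ s in T..x, g s) (g t) (Set.Icc 0 T) t :=
        (my_ftc_deriv hTT ht g hgc).const_add _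
      have hw' : HasDerivWithinAt u (g t) (Set.Icc 0 T) t := by
        apply hw.congr
        · intro x hx
          rw [h x hx, intervalIntegral.integral_symm, neg_neg]
        · rw [h t ht, intervalIntegral.integral_symm, neg_neg]
      exact my_deriv_unique hT ht (hu t ht) hw'
    have hφu' : ∀ t ∈ Set.Icc (0:ℝ) T, φ (u' t) = H t + φ (u T) := by
      intro t ht
      rw [hu'g t ht, hgdef]
      exact φ.apply_symm_apply _
    -- v = F - c on [0,T]
    have hvF : ∀ t ∈ Set.Icc (0:ℝ) T, v t = F t - c := by
      intro t ht
      have hw : HasDerivWithinAt (fun s => H s + φ (u T)) (F t - c) (Set.Icc 0 T) t :=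
        (hH t ht).add_const _
      have hw' : HasDerivWithinAt (fun s => φ (u' s)) (F t - c) (Set.Icc 0 T) t :=
        hw.congr (fun x hx => hφu' x hx) (hφu' t ht)
      exact my_deriv_unique hT ht (hv t ht) hw'
    -- c = 0
    have hc0 : c = 0 := by
      have := h T hTT
      rw [intervalIntegral.integral_same] at this
      linarith
    have hIF : ∫ q in (0:ℝ)..T, F q = 0 := by
      have hTne : (1:ℝ) / T ≠ 0 := one_div_ne_zero hT.ne'
      rw [hcdef] at hc0
      exact (mul_eq_zero.mp hc0).resolve_left hTne
    refine ⟨fun t ht => by rw [hvF t ht, hc0, sub_zero], ?_, ?_⟩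
    · have := hu'g 0 h0T
      rw [hgdef] at this
      simp only [hHdef, intervalIntegral.integral_same, zero_add] at this
      rw [this, φ.symm_apply_apply]
    · have hHT : H T = 0 := by
        have h1 : H T = (∫ r in (0:ℝ)..T, F r) - ∫ _r in (0:ℝ)..T, c :=
          intervalIntegral.integral_sub (hFc.intervalIntegrable_of_Icc hT.le)
            intervalIntegrable_const
        rw [h1, hIF, intervalIntegral.integral_const, hc0]
        simp
      have h0 : u' 0 = u T := by
        have := hu'g 0 h0T
        rw [hgdef] at this
        simp only [hHdef, intervalIntegral.integral_same, zero_add] at this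
        rw [this, φ.symm_apply_apply]
      have hTv : u' T = u T := by
        rw [hu'g T hTT]
        show φ.symm (H T + φ (u T)) = u T
        rw [hHT, zero_add, φ.symm_apply_apply]
      rw [h0, hTv]
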